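/- Let r be a positive integer. Suppose there exist integers k1, k2 with l2 ∣ k1 and l1 ∣ (2k2 − k1 + r). Then there exists a group homomorphism Ψ : Γ(l1, l2) → GL_2(K)/μ_r over PGL_2(K); explicitly, Ψ may be taken to send the class of (α, A) ∈ Kˣ × GL_2(K) to the class of β·A for any β ∈ K with β^r = α^{k1}·det(A)^{k2}, this recipe being independent of all choices. -/

import Mathlib

noncomputable section

open Matrix

variable (K : Type*) [Field K]

/-- The group homomorphism `Kˣ →* GL (Fin n) K` sending a unit of `K` to the corresponding
invertible scalar matrix. -/
def scalarHom (n : ℕ) : Kˣ →* GL (Fin n) K :=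
  Units.map (algebraMap K (Matrix (Fin n) (Fin n) K)).toMonoidHom

theorem scalarHom_mem_center (n : ℕ) (ζ : Kˣ) :
    scalarHom K n ζ ∈ Subgroup.center (GL (Fin n) K) := by
  rw [Subgroup.mem_center_iff]
  intro g
  refine Units.ext ?_
  simp only [Units.val_mul, scalarHom, Units.coe_map, RingHom.toMonoidHom_eq_coe,
    MonoidHom.coe_coe]
  exact (Algebra.commutes (ζ : K) (g : Matrix (Fin n) (Fin n) K)).symm

/-- `μ_d`: the central subgroup of `GL (Fin n) K` consisting of scalar matrices `ζ • 1`
with `ζ ^ d = 1`. -/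
def muGL (n d : ℕ) : Subgroup (GL (Fin n) K) :=
  (rootsOfUnity d K).map (scalarHom K n)

theorem muGL_le_center (n d : ℕ) :
    muGL K n d ≤ Subgroup.center (GL (Fin n) K) := by
  rintro x ⟨ζ, -, rfl⟩
  exact scalarHom_mem_center K n ζ

instance muGL_normal (n d : ℕ) : (muGL K n d).Normal := by
  constructor
  intro x hx g
  have h := Subgroup.mem_center_iff.mp (muGL_le_center K n d hx) g
  have hg : g * x * g⁻¹ = x := by rw [h, mul_inv_cancel_right]
  rwa [hg]

/-- The subgroup `Z = Kˣ·I` of all invertible scalar matrices in `GL (Fin n) K`. -/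
def scalarSub (n : ℕ) : Subgroup (GL (Fin n) K) := (scalarHom K n).range

instance scalarSub_normal (n : ℕ) : (scalarSub K n).Normal := by
  constructor
  intro x hx g
  obtain ⟨ζ, rfl⟩ := hx
  have h := Subgroup.mem_center_iff.mp (scalarHom_mem_center K n ζ) g
  have hg : g * scalarHom K n ζ * g⁻¹ = scalarHom K n ζ := by rw [h, mul_inv_cancel_right]
  rw [hg]
  exact ⟨ζ, rfl⟩

/-- `PGL_n(K) = GL_n(K) / Z` where `Z` is the subgroup of invertible scalar matrices. -/
abbrev PGL (n : ℕ) := GL (Fin n) K ⧸ scalarSub K n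

theorem muGL_le_scalarSub (n d : ℕ) : muGL K n d ≤ scalarSub K n :=
  Subgroup.map_le_range _ _

/-- The natural projection `GL_n(K)/μ_d → PGL_n(K)`. -/
def projToPGL (n d : ℕ) : (GL (Fin n) K ⧸ muGL K n d) →* PGL K n :=
  QuotientGroup.map _ _ (MonoidHom.id _)
    (fun x hx => by simpa using muGL_le_scalarSub K n d hx)

/-- The embedding `i : Kˣ × Kˣ →* Kˣ × GL₂(K)`, `(x₁, x₂) ↦ (x₂/x₁, x₁·I₂)`. -/
def iEmb : Kˣ × Kˣ →* Kˣ × GL (Fin 2) K :=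
  ((MonoidHom.snd Kˣ Kˣ) * (MonoidHom.fst Kˣ Kˣ)⁻¹).prod
    ((scalarHom K 2).comp (MonoidHom.fst Kˣ Kˣ))

/-- The central subgroup `i(μ_a × μ_b)` of `Kˣ × GL₂(K)`. -/
def muGamma (a b : ℕ) : Subgroup (Kˣ × GL (Fin 2) K) :=
  ((rootsOfUnity a K).prod (rootsOfUnity b K)).map (iEmb K)

theorem muGamma_le_center (a b : ℕ) :
    muGamma K a b ≤ Subgroup.center (Kˣ × GL (Fin 2) K) := by
  rintro x ⟨⟨x1, x2⟩, -, rfl⟩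
  rw [Subgroup.mem_center_iff]
  intro g
  have h2 := Subgroup.mem_center_iff.mp (scalarHom_mem_center K 2 x1) g.2
  refine Prod.ext ?_ ?_
  · simpa [iEmb] using mul_comm g.1 (x2 * x1⁻¹)
  · simpa [iEmb] using h2

instance muGamma_normal (a b : ℕ) : (muGamma K a b).Normal := by
  constructor
  intro x hx g
  have h := Subgroup.mem_center_iff.mp (muGamma_le_center K a b hx) g
  have hg : g * x * g⁻¹ = x := by rw [h, mul_inv_cancel_right]
  rwa [hg]

/-- The group `Γ(a, b) = (Kˣ × GL₂(K)) / i(μ_a × μ_b)`. -/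
abbrev Gamma (a b : ℕ) := (Kˣ × GL (Fin 2) K) ⧸ muGamma K a b

/-- The homomorphism `Kˣ × GL₂(K) →* PGL₂(K)`, `(α, A) ↦ [A]`. -/
def sndPGL : (Kˣ × GL (Fin 2) K) →* PGL K 2 :=
  (QuotientGroup.mk' (scalarSub K 2)).comp (MonoidHom.snd Kˣ (GL (Fin 2) K))

theorem muGamma_le_ker (a b : ℕ) : muGamma K a b ≤ (sndPGL K).ker := by
  rintro x ⟨⟨x1, x2⟩, -, rfl⟩
  rw [MonoidHom.mem_ker]
  simp only [sndPGL, iEmb, MonoidHom.comp_apply, MonoidHom.prod_apply]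
  rw [QuotientGroup.mk'_apply, QuotientGroup.eq_one_iff]
  exact ⟨x1, rfl⟩

/-- The natural homomorphism `Γ(a, b) →* PGL₂(K)` descending `(α, A) ↦ [A]`. -/
def GammaToPGL (a b : ℕ) : Gamma K a b →* PGL K 2 :=
  QuotientGroup.lift (muGamma K a b) (sndPGL K)
    (fun _ hx => MonoidHom.mem_ker.mp (muGamma_le_ker K a b hx))

/-- The construction underlying Theorem 4.9 and Remark 4.10: if `l₂ ∣ k₁` and
`l₁ ∣ (2k₂ − k₁ + r)` then there is a group homomorphism `Ψ : Γ(l₁, l₂) → GL₂(K)/μ_r` over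
`PGL₂(K)` sending the class of `(α, A)` to the class of `β·A` for any `β` with
`β^r = α^{k₁}·det(A)^{k₂}`. -/
theorem exists_hom_Gamma_to_GLmod_over_PGL
    {K : Type*} [Field K] [IsAlgClosed K]
    (d1 d2 l1 l2 : ℕ) (hd1 : 0 < d1) (hd2 : 0 < d2)
    (hl1 : (l1 : ℤ) = 2 * (d1 : ℤ) - (d2 : ℤ)) (hl2 : (l2 : ℤ) = 2 * (d2 : ℤ) - (d1 : ℤ))
    (hl1' : 4 ≤ l1) (hl2' : 4 ≤ l2)
    (hchar : ¬ (ringChar K ∣ 2 * l1 * l2))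
    (r : ℕ) (hr : 0 < r) (k1 k2 : ℤ)
    (hk1 : (l2 : ℤ) ∣ k1) (hk2 : (l1 : ℤ) ∣ (2 * k2 - k1 + (r : ℤ))) :
    ∃ Ψ : Gamma K l1 l2 →* (GL (Fin 2) K ⧸ muGL K 2 r),
      (projToPGL K 2 r).comp Ψ = GammaToPGL K l1 l2 ∧
      ∀ (α : Kˣ) (A : GL (Fin 2) K) (β : Kˣ),
        β ^ r = α ^ k1 * (Matrix.GeneralLinearGroup.det A) ^ k2 →
        Ψ (QuotientGroup.mk (α, A)) = QuotientGroup.mk (scalarHom K 2 β * A) := by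
  classical
  -- existence of r-th roots in Kˣ
  have exroot : ∀ x : Kˣ, ∃ β : Kˣ, β ^ r = x := by
    intro x
    obtain ⟨z, hz⟩ := IsAlgClosed.exists_pow_nat_eq (x : K) hr
    have hz0 : z ≠ 0 := by
      intro h; rw [h, zero_pow hr.ne'] at hz; exact x.ne_zero hz.symm
    exact ⟨Units.mk0 z hz0, Units.ext (by simpa using hz)⟩
  set val : Kˣ × GL (Fin 2) K → Kˣ :=
    fun p => p.1 ^ k1 * (Matrix.GeneralLinearGroup.det p.2) ^ k2 with hvaldef
  -- independence of the choice of root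
  have key : ∀ (β β' : Kˣ) (A : GL (Fin 2) K), β ^ r = β' ^ r →
      (QuotientGroup.mk (scalarHom K 2 β * A) : GL (Fin 2) K ⧸ muGL K 2 r)
        = QuotientGroup.mk (scalarHom K 2 β' * A) := by
    intro β β' A h
    rw [QuotientGroup.eq]
    have hcen := Subgroup.mem_center_iff.mp (scalarHom_mem_center K 2 (β⁻¹ * β')) A
    have heq : (scalarHom K 2 β * A)⁻¹ * (scalarHom K 2 β' * A)
        = scalarHom K 2 (β⁻¹ * β') := by
      have hcen' : A * ((scalarHom K 2 β)⁻¹ * scalarHom K 2 β')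
          = ((scalarHom K 2 β)⁻¹ * scalarHom K 2 β') * A := by
        simpa [_root_.map_mul, map_inv] using hcen
      rw [_root_.map_mul, map_inv, _root_.mul_inv_rev]
      calc A⁻¹ * (scalarHom K 2 β)⁻¹ * (scalarHom K 2 β' * A)
          = A⁻¹ * ((scalarHom K 2 β)⁻¹ * scalarHom K 2 β' * A) := by group
        _ = A⁻¹ * (A * ((scalarHom K 2 β)⁻¹ * scalarHom K 2 β')) := by rw [hcen']
        _ = (scalarHom K 2 β)⁻¹ * scalarHom K 2 β' := by rw [inv_mul_cancel_left]
    rw [heq]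
    refine ⟨β⁻¹ * β', ?_, rfl⟩
    show β⁻¹ * β' ∈ rootsOfUnity r K
    rw [mem_rootsOfUnity]
    rw [mul_pow, inv_pow, h, inv_mul_cancel]
  -- the map on Kˣ × GL₂
  set g : Kˣ × GL (Fin 2) K → (GL (Fin 2) K ⧸ muGL K 2 r) :=
    fun p => QuotientGroup.mk (scalarHom K 2 (Classical.choose (exroot (val p))) * p.2)
    with hgdef
  have hwell : ∀ (p : Kˣ × GL (Fin 2) K) (β : Kˣ), β ^ r = val p →
      g p = QuotientGroup.mk (scalarHom K 2 β * p.2) := fun p β h =>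
    key _ _ _ ((Classical.choose_spec (exroot (val p))).trans h.symm)
  have hvalmul : ∀ p q, val (p * q) = val p * val q := by
    intro p q
    simp only [hvaldef, Prod.fst_mul, Prod.snd_mul, _root_.map_mul, mul_zpow]
    exact mul_mul_mul_comm _ _ _ _
  have ghom : ∀ p q, g (p * q) = g p * g q := by
    intro p q
    obtain ⟨βp, hβp⟩ := exroot (val p)
    obtain ⟨βq, hβq⟩ := exroot (val q)
    have hpq : (βp * βq) ^ r = val (p * q) := by
      rw [mul_pow, hβp, hβq, hvalmul]
    rw [hwell _ _ hpq, hwell _ _ hβp, hwell _ _ hβq]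
    have hcen := Subgroup.mem_center_iff.mp (scalarHom_mem_center K 2 βq) p.2
    have heq : scalarHom K 2 (βp * βq) * (p * q).2
        = (scalarHom K 2 βp * p.2) * (scalarHom K 2 βq * q.2) := by
      show scalarHom K 2 (βp * βq) * (p.2 * q.2) = _
      rw [_root_.map_mul, mul_assoc, mul_assoc]
      congr 1
      rw [← mul_assoc, ← mul_assoc, hcen]
    rw [heq, QuotientGroup.mk_mul]
  set Φ : (Kˣ × GL (Fin 2) K) →* (GL (Fin 2) K ⧸ muGL K 2 r) :=
    MonoidHom.mk' g ghom with hΦdef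
  -- Φ kills muGamma
  have hker : ∀ x ∈ muGamma K l1 l2, Φ x = 1 := by
    rintro x ⟨⟨x1, x2⟩, hmem, rfl⟩
    obtain ⟨h1, h2⟩ := Subgroup.mem_prod.mp hmem
    rw [mem_rootsOfUnity] at h1 h2
    have e1 : x1 ^ ((l1 : ℤ)) = 1 := by rw [zpow_natCast, h1]
    have e2 : x2 ^ ((l2 : ℤ)) = 1 := by rw [zpow_natCast, h2]
    have hx2k : x2 ^ k1 = 1 := by
      obtain ⟨m, rfl⟩ := hk1
      rw [_root_.zpow_mul, e2, _root_.one_zpow]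
    have hx1k : x1 ^ (2 * k2 - k1) = (x1⁻¹) ^ (r : ℕ) := by
      obtain ⟨n, hn⟩ := hk2
      have he : (2 * k2 - k1 : ℤ) = (l1 : ℤ) * n + (-(r : ℤ)) := by linarith
      rw [he, _root_.zpow_add, _root_.zpow_mul, e1, _root_.one_zpow, one_mul,
        _root_.zpow_neg, ← _root_.inv_zpow, zpow_natCast]
    have hdet : Matrix.GeneralLinearGroup.det ((iEmb K (x1, x2)).2) = x1 ^ 2 := by
      refine Units.ext ?_
      show ((Matrix.GeneralLinearGroup.det (scalarHom K 2 x1) : Kˣ) : K) = ((x1 ^ 2 : Kˣ) : K)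
      rw [Matrix.GeneralLinearGroup.val_det_apply]
      show Matrix.det (algebraMap K (Matrix (Fin 2) (Fin 2) K) (x1 : K)) = _
      rw [Algebra.algebraMap_eq_smul_one, Matrix.det_smul, Matrix.det_one, mul_one]
      simp
    have hfst : (iEmb K (x1, x2)).1 = x2 * x1⁻¹ := rfl
    have hvv : val (iEmb K (x1, x2)) = (x1⁻¹) ^ r := by
      rw [hvaldef]
      simp only
      have h2k : ((x1 : Kˣ) ^ 2) ^ k2 = x1 ^ (2 * k2 : ℤ) := by
        rw [← zpow_natCast x1 2, ← _root_.zpow_mul]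
        norm_num
      have hik : (x1⁻¹ : Kˣ) ^ k1 = x1 ^ (-k1) := by
        rw [_root_.inv_zpow, ← _root_.zpow_neg]
      rw [hfst, hdet, mul_zpow, hx2k, one_mul, hik, h2k, ← _root_.zpow_add,
        (by ring : -k1 + 2 * k2 = 2 * k2 - k1), hx1k]
    have : Φ (iEmb K (x1, x2)) = g (iEmb K (x1, x2)) := rfl
    rw [this, hwell _ _ hvv.symm]
    have hsnd : (iEmb K (x1, x2)).2 = scalarHom K 2 x1 := rfl
    rw [hsnd, ← _root_.map_mul, inv_mul_cancel, _root_.map_one]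
    exact QuotientGroup.mk_one _
  refine ⟨QuotientGroup.lift (muGamma K l1 l2) Φ hker, ?_, ?_⟩
  · ext p
    show projToPGL K 2 r (QuotientGroup.lift (muGamma K l1 l2) Φ hker (QuotientGroup.mk p))
        = GammaToPGL K l1 l2 (QuotientGroup.mk p)
    show projToPGL K 2 r (Φ p) = _
    obtain ⟨β, hβ⟩ := exroot (val p)
    have hΦp : Φ p = QuotientGroup.mk (scalarHom K 2 β * p.2) := hwell _ _ hβ
    rw [hΦp]
    have : projToPGL K 2 r (QuotientGroup.mk (scalarHom K 2 β * p.2))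
        = QuotientGroup.mk (scalarHom K 2 β * p.2) := by
      simp [projToPGL, QuotientGroup.map_mk]
    rw [this]
    have : GammaToPGL K l1 l2 (QuotientGroup.mk p)
        = (QuotientGroup.mk p.2 : PGL K 2) := rfl
    rw [this]
    rw [QuotientGroup.eq]
    have hre : (scalarHom K 2 β * p.2)⁻¹ * p.2
        = p.2⁻¹ * (scalarHom K 2 β)⁻¹ * (p.2⁻¹)⁻¹ := by group
    rw [hre]
    exact (scalarSub_normal K 2).conj_mem _ ⟨β⁻¹, map_inv _ _⟩ _
  · intro α A β hβ
    show Φ (α, A) = _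
    exact hwell (α, A) β hβ


end
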